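/- Adding a single pixel P ∉ D to a digital object D cannot simultaneously increase the number of holes and the number of 0-connected components: it is not the case that both h(D ∪ {P}) > h(D) and c(D ∪ {P}) > c(D). -/

import Mathlib

open Set

/-- A point of `ℤ²`, identified with the pixel centered there. -/
abbrev Pt := ℤ × ℤ

/-- Two pixels are 0-adjacent if they are distinct and share at least a vertex. -/
def adj0 (a b : Pt) : Prop := a ≠ b ∧ |a.1 - b.1| ≤ 1 ∧ |a.2 - b.2| ≤ 1

/-- Two pixels are 1-adjacent if they share an edge. -/
def adj1 (a b : Pt) : Prop := |a.1 - b.1| + |a.2 - b.2| = 1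

/-- Adjacency parameterized by `α ∈ {0,1}`. -/
def adjA (α : ℕ) : Pt → Pt → Prop := if α = 0 then adj0 else adj1

/-- Connectivity within `S` by a path of consecutively `adj`-adjacent points. -/
def connIn (adj : Pt → Pt → Prop) (S : Set Pt) (x y : Pt) : Prop :=
  Relation.ReflTransGen (fun u v => u ∈ S ∧ v ∈ S ∧ adj u v) x y

/-- The connected components of `S` with respect to `adj`. -/
def components (adj : Pt → Pt → Prop) (S : Set Pt) : Set (Set Pt) :=
  {C | ∃ x ∈ S, C = {y | y ∈ S ∧ connIn adj S x y}}

/-- Number of 0-connected components of `S`. -/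
noncomputable def ccount (S : Set Pt) : ℕ := (components adj0 S).ncard

/-- Number of holes: finite 1-components of the complement of `S`. -/
noncomputable def hcount (S : Set Pt) : ℕ :=
  {C | C ∈ components adj1 Sᶜ ∧ C.Finite}.ncard

/-- The four lattice points `{q, q+(1,0), q+(0,1), q+(1,1)}`: used both for the
corner set of the pixel `q` (in shifted lattice coordinates) and for the 2-block
with base point `q`. -/
def cell (q : Pt) : Set Pt := {q, (q.1 + 1, q.2), (q.1, q.2 + 1), (q.1 + 1, q.2 + 1)}

/-- Number of distinct grid points occurring as corners of pixels of `S`. -/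
noncomputable def vcount (S : Set Pt) : ℕ := (⋃ p ∈ S, cell p).ncard

/-- Number of 2-blocks (2×2 grid squares of pixels) contained in `S`. -/
noncomputable def bcount (S : Set Pt) : ℕ := {q | cell q ⊆ S}.ncard

/-- Diagonal adjacency: 0-adjacent but not 1-adjacent. -/
def diagAdj (a b : Pt) : Prop := |a.1 - b.1| = 1 ∧ |a.2 - b.2| = 1

/-- `w` is a 0-tunnel of `S`: exactly two pixels of `S` have `w` as a corner,
and these two pixels meet only diagonally at `w`. -/
def tunnelAt (S : Set Pt) (w : Pt) : Prop :=
  ∃ a b : Pt, a ∈ S ∧ b ∈ S ∧ diagAdj a b ∧ {p | p ∈ S ∧ w ∈ cell p} = {a, b}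

/-- Number of 0-tunnels of `S`. -/
noncomputable def tcount (S : Set Pt) : ℕ := {w | tunnelAt S w}.ncard

/-- `S` is tunnel-free. -/
def TunnelFree (S : Set Pt) : Prop := ∀ w : Pt, ¬ tunnelAt S w

/-- A consequence-style notion of one-dimensionality: no pixel of `M` is
`adj`-adjacent to three pairwise `adj`-adjacent pixels of `M`. -/
def OneDim (adj : Pt → Pt → Prop) (M : Set Pt) : Prop :=
  ∀ p ∈ M, ¬ ∃ a ∈ M, ∃ b ∈ M, ∃ c ∈ M,
    adj p a ∧ adj p b ∧ adj p c ∧ adj a b ∧ adj a c ∧ adj b c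

/-- `M` is `adj`-connected. -/
def ConnectedObj (adj : Pt → Pt → Prop) (M : Set Pt) : Prop :=
  ∀ x ∈ M, ∀ y ∈ M, connIn adj M x y

/-- A digital curve: a nonempty finite 0-connected one-dimensional digital object. -/
def DigitalCurve (M : Set Pt) : Prop :=
  M.Finite ∧ M.Nonempty ∧ ConnectedObj adj0 M ∧ OneDim adj0 M

/-- A simple closed digital curve with respect to `adj`: a cyclic sequence of
pixels in which the `adj`-adjacent pairs are exactly the cyclically consecutive
ones, and which is one-dimensional. -/
def SimpleClosedCurve (adj : Pt → Pt → Prop) (M : Set Pt) : Prop :=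
  ∃ l : ℕ, 0 < l ∧ ∃ f : ZMod l → Pt, Function.Injective f ∧ Set.range f = M ∧
    (∀ i j : ZMod l, adj (f i) (f j) ↔ j = i + 1 ∨ i = j + 1) ∧ OneDim adj M

/-- A simple digital arc: a nonempty 0-connected proper subset of a simple
closed digital curve. -/
def SimpleArc (adj : Pt → Pt → Prop) (M : Set Pt) : Prop :=
  M.Nonempty ∧ ConnectedObj adj0 M ∧
    ∃ ρ : Set Pt, SimpleClosedCurve adj ρ ∧ M ⊆ ρ ∧ M ≠ ρ

def comp (adj : Pt → Pt → Prop) (S : Set Pt) (x : Pt) : Set Pt :=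
  {y | y ∈ S ∧ connIn adj S x y}

lemma adj0_symm {a b : Pt} (h : adj0 a b) : adj0 b a :=
  ⟨h.1.symm, by rw [abs_sub_comm]; exact h.2.1, by rw [abs_sub_comm]; exact h.2.2⟩

lemma adj1_symm {a b : Pt} (h : adj1 a b) : adj1 b a := by
  unfold adj1 at *; rw [abs_sub_comm, abs_sub_comm b.2]; exact h

lemma connIn_symm {adj : Pt → Pt → Prop} (hs : ∀ {a b : Pt}, adj a b → adj b a)
    {S : Set Pt} {x y : Pt} (h : connIn adj S x y) : connIn adj S y x := by
  induction h with
  | refl => exact Relation.ReflTransGen.refl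
  | tail _ step ih =>
    exact Relation.ReflTransGen.head ⟨step.2.1, step.1, hs step.2.2⟩ ih

lemma connIn_mono {adj : Pt → Pt → Prop} {S T : Set Pt} (hST : S ⊆ T) {x y : Pt}
    (h : connIn adj S x y) : connIn adj T x y :=
  Relation.ReflTransGen.mono (r := fun u v => u ∈ S ∧ v ∈ S ∧ adj u v)
    (p := fun u v => u ∈ T ∧ v ∈ T ∧ adj u v) (fun _ _ h => ⟨hST h.1, hST h.2.1, h.2.2⟩) _ _ h

lemma mem_comp_self {adj : Pt → Pt → Prop} {S : Set Pt} {x : Pt} (hx : x ∈ S) :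
    x ∈ comp adj S x := ⟨hx, Relation.ReflTransGen.refl⟩

lemma comp_mem_components {adj : Pt → Pt → Prop} {S : Set Pt} {x : Pt} (hx : x ∈ S) :
    comp adj S x ∈ components adj S := ⟨x, hx, rfl⟩

lemma comp_subset {adj : Pt → Pt → Prop} {S : Set Pt} {x : Pt} :
    comp adj S x ⊆ S := fun _ h => h.1

lemma comp_eq_of_conn {adj : Pt → Pt → Prop} (hs : ∀ {a b : Pt}, adj a b → adj b a)
    {S : Set Pt} {x y : Pt} (h : connIn adj S x y) :
    comp adj S x = comp adj S y := by
  ext z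
  exact ⟨fun hz => ⟨hz.1, ((connIn_symm hs h).trans hz.2)⟩,
    fun hz => ⟨hz.1, h.trans hz.2⟩⟩

lemma components_eq_of_mem {adj : Pt → Pt → Prop} (hs : ∀ {a b : Pt}, adj a b → adj b a)
    {S : Set Pt} {C₁ C₂ : Set Pt} (h₁ : C₁ ∈ components adj S) (h₂ : C₂ ∈ components adj S)
    {y : Pt} (hy₁ : y ∈ C₁) (hy₂ : y ∈ C₂) : C₁ = C₂ := by
  obtain ⟨x₁, hx₁, rfl⟩ := h₁
  obtain ⟨x₂, hx₂, rfl⟩ := h₂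
  have e₁ : comp adj S x₁ = comp adj S y := comp_eq_of_conn hs hy₁.2
  have e₂ : comp adj S x₂ = comp adj S y := comp_eq_of_conn hs hy₂.2
  show comp adj S x₁ = comp adj S x₂
  rw [e₁, e₂]

lemma components_finite {adj : Pt → Pt → Prop} {S : Set Pt} (hS : S.Finite) :
    (components adj S).Finite := by
  apply hS.finite_subsets.subset
  rintro C ⟨x, hx, rfl⟩
  exact fun y hy => hy.1

lemma ncard_le_of_surjOn {s t : Set (Set Pt)} {f : Set Pt → Set Pt}
    (h : SurjOn f s t) (hs : s.Finite) : t.ncard ≤ s.ncard :=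
  le_trans (ncard_le_ncard h (hs.image f)) (ncard_image_le hs)

lemma ccount_le_of_adj (D : Set Pt) (hD : D.Finite) (P : Pt)
    (hadj : ∃ d ∈ D, adj0 P d) : ccount (insert P D) ≤ ccount D := by
  obtain ⟨d, hd, hPd⟩ := hadj
  set T := insert P D with hT
  have hDT : D ⊆ T := subset_insert _ _
  set f : Set Pt → Set Pt := fun C => {y | y ∈ T ∧ ∃ x ∈ C, connIn adj0 T x y} with hf
  have hsurj : SurjOn f (components adj0 D) (components adj0 T) := by
    rintro C' ⟨z, hz, rfl⟩
    -- choose z0 ∈ D connected to z in T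
    obtain ⟨z0, hz0, hzz0⟩ : ∃ z0 ∈ D, connIn adj0 T z z0 := by
      rcases hz with rfl | hzD
      · exact ⟨d, hd, Relation.ReflTransGen.single ⟨mem_insert _ _, hDT hd, hPd⟩⟩
      · exact ⟨z, hzD, Relation.ReflTransGen.refl⟩
    refine ⟨comp adj0 D z0, comp_mem_components hz0, ?_⟩
    ext y
    constructor
    · rintro ⟨hyT, x, hx, hxy⟩
      exact ⟨hyT, (hzz0.trans (connIn_mono hDT hx.2)).trans hxy⟩
    · rintro ⟨hyT, hzy⟩
      exact ⟨hyT, z0, mem_comp_self hz0, (connIn_symm adj0_symm hzz0).trans hzy⟩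
  exact ncard_le_of_surjOn hsurj (components_finite hD)

lemma adj1_right (a : Pt) : adj1 a (a.1 + 1, a.2) := by
  simp [adj1]

lemma holes_finite (D : Set Pt) (hD : D.Finite) :
    {C | C ∈ components adj1 Dᶜ ∧ C.Finite}.Finite := by
  set T : Set Pt := {q : Pt | (q.1 + 1, q.2) ∈ D} with hTdef
  have hT : T.Finite := by
    have : T = (fun q : Pt => (q.1 + 1, q.2)) ⁻¹' D := rfl
    rw [this]
    apply hD.preimage
    intro a _ b _ hab
    simp only [Prod.mk.injEq] at hab
    exact Prod.ext (by omega) hab.2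
  have hex : ∀ C ∈ {C | C ∈ components adj1 Dᶜ ∧ C.Finite}, ∃ p, p ∈ C ∧ p ∈ T := by
    rintro C ⟨⟨x, hx, rfl⟩, hfin⟩
    have hne : (comp adj1 Dᶜ x).Nonempty := ⟨x, mem_comp_self hx⟩
    obtain ⟨a, ha, hmax⟩ := Set.Finite.exists_maximalFor Prod.fst _ hfin hne
    refine ⟨a, ha, ?_⟩
    by_contra hr
    have hrC : (a.1 + 1, a.2) ∈ comp adj1 Dᶜ x :=
      ⟨hr, ha.2.tail ⟨ha.1, hr, adj1_right a⟩⟩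
    have := hmax hrC (by simp)
    simp at this
  classical
  set F : Set Pt → Pt := fun C => if h : ∃ p, p ∈ C ∧ p ∈ T then h.choose else (0, 0) with hF
  have hFC : ∀ C ∈ {C | C ∈ components adj1 Dᶜ ∧ C.Finite}, F C ∈ C ∧ F C ∈ T := by
    intro C hC
    have h := hex C hC
    simp only [hF, dif_pos h]
    exact h.choose_spec
  apply Set.Finite.of_finite_image (f := F)
  · exact hT.subset (by rintro _ ⟨C, hC, rfl⟩; exact (hFC C hC).2)
  · intro C₁ h₁ C₂ h₂ he
    exact components_eq_of_mem adj1_symm h₁.1 h₂.1 (hFC C₁ h₁).1 (he ▸ (hFC C₂ h₂).1)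

lemma adj1_iff (a b : Pt) : adj1 a b ↔ (a.1 - b.1).natAbs + (a.2 - b.2).natAbs = 1 := by
  simp only [adj1, Int.abs_eq_natAbs]
  omega

lemma abs_le_one_iff' (x : ℤ) : |x| ≤ 1 ↔ x.natAbs ≤ 1 := by
  rw [Int.abs_eq_natAbs]; omega

lemma adj1_cases {n P : Pt} (h : adj1 n P) :
    n = (P.1 + 1, P.2) ∨ n = (P.1 - 1, P.2) ∨ n = (P.1, P.2 + 1) ∨ n = (P.1, P.2 - 1) := by
  rw [adj1_iff] at h
  have : (n.1 = P.1 + 1 ∧ n.2 = P.2) ∨ (n.1 = P.1 - 1 ∧ n.2 = P.2) ∨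
      (n.1 = P.1 ∧ n.2 = P.2 + 1) ∨ (n.1 = P.1 ∧ n.2 = P.2 - 1) := by omega
  rcases this with ⟨h1, h2⟩ | ⟨h1, h2⟩ | ⟨h1, h2⟩ | ⟨h1, h2⟩
  · exact Or.inl (Prod.ext h1 h2)
  · exact Or.inr (Or.inl (Prod.ext h1 h2))
  · exact Or.inr (Or.inr (Or.inl (Prod.ext h1 h2)))
  · exact Or.inr (Or.inr (Or.inr (Prod.ext h1 h2)))

lemma hcount_le_of_iso (D : Set Pt) (hD : D.Finite) (P : Pt) (hP : P ∉ D)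
    (hiso : ∀ d ∈ D, ¬ adj0 P d) : hcount (insert P D) ≤ hcount D := by
  set A : Set Pt := Dᶜ with hA
  set B : Set Pt := (insert P D)ᶜ with hBdef
  have hBA : B ⊆ A := compl_subset_compl.2 (subset_insert _ _)
  have hPB : P ∉ B := fun h => h (mem_insert _ _)
  have hmemB : ∀ q : Pt, q ≠ P → q ∉ D → q ∈ B := by
    intro q h1 h2
    simp only [hBdef, mem_compl_iff, mem_insert_iff, not_or]
    exact ⟨h1, h2⟩
  have hB : ∀ q : Pt, q ≠ P → |q.1 - P.1| ≤ 1 → |q.2 - P.2| ≤ 1 → q ∈ B := by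
    intro q h1 h2 h3
    refine hmemB q h1 (fun hq => hiso q hq ⟨Ne.symm h1, ?_, ?_⟩)
    · rwa [abs_sub_comm]
    · rwa [abs_sub_comm]
  have nbrB : ∀ n : Pt, adj1 n P → n ∈ B := by
    intro n hn
    have h' := hn
    rw [adj1_iff] at h'
    refine hB n (fun he => by simp [he] at h') ?_ ?_
    · rw [abs_le_one_iff']; omega
    · rw [abs_le_one_iff']; omega
  -- every 1-neighbor of P connects within B to the hub (P.1+1, P.2)
  have hub : ∀ n : Pt, adj1 n P → connIn adj1 B n (P.1 + 1, P.2) := by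
    intro n hn
    have step : ∀ u v : Pt, u ∈ B → v ∈ B → adj1 u v → connIn adj1 B u v :=
      fun u v hu hv h => Relation.ReflTransGen.single ⟨hu, hv, h⟩
    have m0 : (P.1 + 1, P.2) ∈ B := hB _ (by simp [Prod.ext_iff]) (by rw [abs_le_one_iff']; simp) (by simp)
    have m1 : (P.1 + 1, P.2 + 1) ∈ B := hB _ (by simp [Prod.ext_iff]) (by rw [abs_le_one_iff']; simp) (by rw [abs_le_one_iff']; simp)
    have m2 : (P.1, P.2 + 1) ∈ B := hB _ (by simp [Prod.ext_iff]) (by simp) (by rw [abs_le_one_iff']; simp)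
    have m3 : (P.1 - 1, P.2 + 1) ∈ B := hB _ (by simp [Prod.ext_iff]) (by rw [abs_le_one_iff']; simp) (by rw [abs_le_one_iff']; simp)
    have m4 : (P.1 - 1, P.2) ∈ B := hB _ (by simp [Prod.ext_iff]) (by rw [abs_le_one_iff']; simp) (by simp)
    have m5 : (P.1 + 1, P.2 - 1) ∈ B := hB _ (by simp [Prod.ext_iff]) (by rw [abs_le_one_iff']; simp) (by rw [abs_le_one_iff']; simp)
    have m6 : (P.1, P.2 - 1) ∈ B := hB _ (by simp [Prod.ext_iff]) (by simp) (by rw [abs_le_one_iff']; simp)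
    rcases adj1_cases hn with h | h | h | h <;> subst h
    · exact Relation.ReflTransGen.refl
    · exact ((step _ _ m4 m3 (by rw [adj1_iff]; simp)).trans
        (step _ _ m3 m2 (by rw [adj1_iff]; simp))).trans
        ((step _ _ m2 m1 (by rw [adj1_iff]; simp)).trans
        (step _ _ m1 m0 (by rw [adj1_iff]; simp)))
    · exact (step _ _ m2 m1 (by rw [adj1_iff]; simp)).trans
        (step _ _ m1 m0 (by rw [adj1_iff]; simp))
    · exact (step _ _ m6 m5 (by rw [adj1_iff]; simp)).trans
        (step _ _ m5 m0 (by rw [adj1_iff]; simp))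
  have nbr_conn : ∀ m n : Pt, adj1 m P → adj1 n P → connIn adj1 B m n :=
    fun m n hm hn => (hub m hm).trans (connIn_symm adj1_symm (hub n hn))
  -- rerouting paths in A around P
  have reroute : ∀ u ∈ B, ∀ v, connIn adj1 A u v →
      (v ≠ P → connIn adj1 B u v) ∧ (∀ n, adj1 n P → v = P → connIn adj1 B u n) := by
    intro u hu v h
    induction h with
    | refl =>
      refine ⟨fun _ => Relation.ReflTransGen.refl, fun n hn huP => ?_⟩
      exact absurd (huP ▸ hu) hPB
    | tail hpath stp ih =>
      rename_i b c
      obtain ⟨hbA, hcA, hadj⟩ := stp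
      constructor
      · intro hcP
        have hcB : c ∈ B := hmemB c hcP hcA
        by_cases hbP : b = P
        · subst hbP
          exact ih.2 c (adj1_symm hadj) rfl
        · have hbB : b ∈ B := hmemB b hbP hbA
          exact (ih.1 hbP).tail ⟨hbB, hcB, hadj⟩
      · intro n hn hcP
        have hadj' : adj1 b P := hcP ▸ hadj
        have hbP : b ≠ P := by
          rintro rfl
          simp [adj1] at hadj'
        exact (ih.1 hbP).trans (nbr_conn b n hadj' hn)
  -- injective map from holes of insert P D to holes of D
  set g : Set Pt → Set Pt := fun C => {y | y ∈ A ∧ ∃ x ∈ C, connIn adj1 A x y} with hg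
  have hgeq : ∀ z ∈ B, g (comp adj1 B z) = comp adj1 A z := by
    intro z hz
    ext y
    constructor
    · rintro ⟨hyA, x, hx, hxy⟩
      exact ⟨hyA, (connIn_mono hBA hx.2).trans hxy⟩
    · rintro ⟨hyA, hzy⟩
      exact ⟨hyA, z, mem_comp_self hz, hzy⟩
  have hmaps : ∀ C ∈ {C | C ∈ components adj1 B ∧ C.Finite},
      g C ∈ {C | C ∈ components adj1 A ∧ C.Finite} := by
    rintro C ⟨⟨z, hz, rfl⟩, hfin⟩
    rw [show ({y | y ∈ B ∧ connIn adj1 B z y} : Set Pt) = comp adj1 B z from rfl] at *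
    rw [hgeq z hz]
    refine ⟨comp_mem_components (hBA hz), ?_⟩
    apply (hfin.insert P).subset
    rintro y ⟨hyA, hzy⟩
    by_cases hyP : y = P
    · exact Or.inl hyP
    · exact Or.inr ⟨hmemB y hyP hyA, (reroute z hz y hzy).1 hyP⟩
  have hinj : InjOn g {C | C ∈ components adj1 B ∧ C.Finite} := by
    rintro C₁ ⟨⟨z₁, hz₁, rfl⟩, hf₁⟩ C₂ ⟨⟨z₂, hz₂, rfl⟩, hf₂⟩ he
    rw [show ({y | y ∈ B ∧ connIn adj1 B z₁ y} : Set Pt) = comp adj1 B z₁ from rfl,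
        show ({y | y ∈ B ∧ connIn adj1 B z₂ y} : Set Pt) = comp adj1 B z₂ from rfl] at *
    rw [hgeq z₁ hz₁, hgeq z₂ hz₂] at he
    have hz2m : z₂ ∈ comp adj1 A z₁ := he ▸ mem_comp_self (hBA hz₂)
    have hconn : connIn adj1 B z₁ z₂ := by
      refine (reroute z₁ hz₁ z₂ hz2m.2).1 (fun h => ?_)
      exact hPB (h ▸ hz₂)
    exact comp_eq_of_conn adj1_symm hconn
  exact ncard_le_ncard_of_injOn g hmaps hinj (holes_finite D hD)

theorem not_holes_and_components_increase (D : Set Pt) (hD : D.Finite) (P : Pt)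
    (hP : P ∉ D) :
    ¬ (hcount D < hcount (insert P D) ∧ ccount D < ccount (insert P D)) := by
  rintro ⟨hh, hc⟩
  by_cases hadj : ∃ d ∈ D, adj0 P d
  · exact absurd hc (not_lt.2 (ccount_le_of_adj D hD P hadj))
  · push_neg at hadj
    exact absurd hh (not_lt.2 (hcount_le_of_iso D hD P hP hadj))
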